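/- Let k ≥ 1 and let s : Fin k → ℕ with s i ≥ 1 for all i. Let M be a nonnegative real square matrix indexed by Σ i, Fin (s i), partitioned into k² blocks with square diagonal blocks. Define the downward row sum contraction M↓ as the k×k matrix with entries M↓ i j = min over u ∈ Fin (s i) of Σ_{v ∈ Fin (s j)} M ((i,u),(j,v)) (the minimum row sum within block (i,j)). Then ρ(M↓) ≤ ρ(M). -/

import Mathlib

open Matrix Filter
open scoped ENNReal NNReal

attribute [local instance] Matrix.linftyOpNormedRing Matrix.linftyOpNormedAlgebra

/-- Spectral radius of a real square matrix: the maximum of the moduli of its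
complex eigenvalues (elements of the spectrum of the matrix over `ℂ`). -/
noncomputable def specRad {n : Type*} [Fintype n] [DecidableEq n]
    (M : Matrix n n ℝ) : ℝ :=
  sSup ((fun z : ℂ => ‖z‖) '' spectrum ℂ (M.map (algebraMap ℝ ℂ)))

namespace DRSC

variable {k : ℕ} {s : Fin k → ℕ}

/-- The downward row-sum contraction. -/
def contr (hs : ∀ i, 1 ≤ s i) (N : Matrix (Σ i, Fin (s i)) (Σ i, Fin (s i)) ℝ) :
    Matrix (Fin k) (Fin k) ℝ :=
  Matrix.of fun i j => Finset.univ.inf'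
    (Finset.univ_nonempty_iff.mpr (Fin.pos_iff_nonempty.mp (hs i)))
    (fun u : Fin (s i) => ∑ v : Fin (s j), N ⟨i, u⟩ ⟨j, v⟩)

variable (hs : ∀ i, 1 ≤ s i) {N A B : Matrix (Σ i, Fin (s i)) (Σ i, Fin (s i)) ℝ}

lemma hne (h : ∀ i, 1 ≤ s i) (i : Fin k) : (Finset.univ : Finset (Fin (s i))).Nonempty :=
  Finset.univ_nonempty_iff.mpr (Fin.pos_iff_nonempty.mp (h i))

lemma contr_nonneg (hN : ∀ p q, 0 ≤ N p q) (i j : Fin k) : 0 ≤ contr hs N i j :=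
  Finset.le_inf' (hne hs i) _ fun u _ => Finset.sum_nonneg fun v _ => hN _ _

lemma contr_le (i j : Fin k) (u : Fin (s i)) :
    contr hs N i j ≤ ∑ v : Fin (s j), N ⟨i, u⟩ ⟨j, v⟩ :=
  Finset.inf'_le _ (Finset.mem_univ u)

lemma pow_nonneg_entry {n : Type*} [Fintype n] [DecidableEq n] {M : Matrix n n ℝ}
    (hM : ∀ p q, 0 ≤ M p q) (m : ℕ) (hm : 1 ≤ m) : ∀ p q, 0 ≤ (M ^ m) p q := by
  induction m with
  | zero => omega
  | succ m ih =>
    rcases Nat.eq_or_lt_of_le hm with h | h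
    · simpa [← h, pow_one] using hM
    · intro p q
      rw [pow_succ, Matrix.mul_apply]
      exact Finset.sum_nonneg fun l _ => mul_nonneg (ih (by omega) p l) (hM l q)

lemma mul_contr_le (hA : ∀ p q, 0 ≤ A p q) (hB : ∀ p q, 0 ≤ B p q) (i j : Fin k) :
    (contr hs A * contr hs B) i j ≤ contr hs (A * B) i j := by
  refine Finset.le_inf' (hne hs i) _ fun u _ => ?_
  have step1 : ∑ v : Fin (s j), (A * B) ⟨i, u⟩ ⟨j, v⟩
      = ∑ l : Fin k, ∑ w : Fin (s l), A ⟨i, u⟩ ⟨l, w⟩ * ∑ v : Fin (s j), B ⟨l, w⟩ ⟨j, v⟩ := by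
    calc ∑ v : Fin (s j), (A * B) ⟨i, u⟩ ⟨j, v⟩
        = ∑ v : Fin (s j), ∑ q, A ⟨i, u⟩ q * B q ⟨j, v⟩ := by
          simp only [Matrix.mul_apply]
      _ = ∑ q, ∑ v : Fin (s j), A ⟨i, u⟩ q * B q ⟨j, v⟩ := Finset.sum_comm
      _ = ∑ l : Fin k, ∑ w : Fin (s l), ∑ v : Fin (s j),
            A ⟨i, u⟩ ⟨l, w⟩ * B ⟨l, w⟩ ⟨j, v⟩ := by
          rw [← Finset.univ_sigma_univ, Finset.sum_sigma]
      _ = ∑ l : Fin k, ∑ w : Fin (s l), A ⟨i, u⟩ ⟨l, w⟩ * ∑ v : Fin (s j), B ⟨l, w⟩ ⟨j, v⟩ := by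
          simp only [Finset.mul_sum]
  rw [step1, Matrix.mul_apply]
  refine Finset.sum_le_sum fun l _ => ?_
  calc contr hs A i l * contr hs B l j
      ≤ (∑ w : Fin (s l), A ⟨i, u⟩ ⟨l, w⟩) * contr hs B l j :=
        mul_le_mul_of_nonneg_right (contr_le hs i l u) (contr_nonneg hs hB l j)
    _ = ∑ w : Fin (s l), A ⟨i, u⟩ ⟨l, w⟩ * contr hs B l j := Finset.sum_mul _ _ _
    _ ≤ ∑ w : Fin (s l), A ⟨i, u⟩ ⟨l, w⟩ * ∑ v : Fin (s j), B ⟨l, w⟩ ⟨j, v⟩ :=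
        Finset.sum_le_sum fun w _ =>
          mul_le_mul_of_nonneg_left (contr_le hs l j w) (hA _ _)

lemma pow_le_contr {M : Matrix (Σ i, Fin (s i)) (Σ i, Fin (s i)) ℝ}
    (hM : ∀ p q, 0 ≤ M p q) (m : ℕ) (hm : 1 ≤ m) :
    ∀ i j, ((contr hs M) ^ m) i j ≤ contr hs (M ^ m) i j := by
  induction m with
  | zero => omega
  | succ m ih =>
    rcases Nat.eq_or_lt_of_le hm with h | h
    · simp [← h, pow_one]
    · have hm1 : 1 ≤ m := by omega
      intro i j
      calc ((contr hs M) ^ (m + 1)) i j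
          = ∑ l, ((contr hs M) ^ m) i l * contr hs M l j := by
            rw [pow_succ, Matrix.mul_apply]
        _ ≤ ∑ l, contr hs (M ^ m) i l * contr hs M l j :=
            Finset.sum_le_sum fun l _ => mul_le_mul_of_nonneg_right (ih hm1 i l)
              (contr_nonneg hs hM l j)
        _ = (contr hs (M ^ m) * contr hs M) i j := (Matrix.mul_apply).symm
        _ ≤ contr hs ((M ^ m) * M) i j :=
            mul_contr_le hs (pow_nonneg_entry hM m hm1) hM i j
        _ = contr hs (M ^ (m + 1)) i j := by rw [← pow_succ]

/-- linfty operator norm bound: if `0 ≤ B ≤ contr N` entrywise and `N` nonneg, `‖B‖₊ ≤ ‖N‖₊`. -/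
lemma nnnorm_le {B : Matrix (Fin k) (Fin k) ℝ} (hB0 : ∀ i j, 0 ≤ B i j)
    (hBle : ∀ i j, B i j ≤ contr hs N i j) (hN : ∀ p q, 0 ≤ N p q) :
    ‖B‖₊ ≤ ‖N‖₊ := by
  rw [Matrix.linfty_opNNNorm_def, Matrix.linfty_opNNNorm_def]
  refine Finset.sup_le fun i _ => ?_
  obtain ⟨u, -⟩ := (hne hs i).exists_mem
  refine le_trans ?_ (Finset.le_sup (Finset.mem_univ (⟨i, u⟩ : Σ i, Fin (s i))))
  have key : ∑ j, B i j ≤ ∑ q, N ⟨i, u⟩ q := by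
    calc ∑ j, B i j ≤ ∑ j, contr hs N i j := Finset.sum_le_sum fun j _ => hBle i j
      _ ≤ ∑ j, ∑ v : Fin (s j), N ⟨i, u⟩ ⟨j, v⟩ :=
          Finset.sum_le_sum fun j _ => contr_le hs i j u
      _ = ∑ q, N ⟨i, u⟩ q := by rw [← Finset.univ_sigma_univ, Finset.sum_sigma]
  rw [← NNReal.coe_le_coe]
  push_cast
  calc ∑ j, ‖B i j‖ = ∑ j, B i j := by
        exact Finset.sum_congr rfl fun j _ => Real.norm_of_nonneg (hB0 i j)
    _ ≤ ∑ q, N ⟨i, u⟩ q := key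
    _ = ∑ q, ‖N ⟨i, u⟩ q‖ :=
        Finset.sum_congr rfl fun q _ => (Real.norm_of_nonneg (hN _ q)).symm

end DRSC

/-- The spectral radius of the downward row sum contraction (minimum row sum in
each block, with square diagonal blocks) is at most the spectral radius of the
original nonnegative matrix. -/
theorem downwardRowSumContraction_specRad_le
    {k : ℕ} (hk : 1 ≤ k) (s : Fin k → ℕ) (hs : ∀ i, 1 ≤ s i)
    (M : Matrix (Σ i, Fin (s i)) (Σ i, Fin (s i)) ℝ)
    (hM : ∀ p q, 0 ≤ M p q) :
    specRad (Matrix.of fun (i j : Fin k) =>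
      Finset.univ.inf'
        (Finset.univ_nonempty_iff.mpr (Fin.pos_iff_nonempty.mp (hs i)))
        (fun u : Fin (s i) => ∑ v : Fin (s j), M ⟨i, u⟩ ⟨j, v⟩)) ≤
      specRad M := by
  classical
  show specRad (DRSC.contr hs M) ≤ specRad M
  set A := DRSC.contr hs M with hA
  set Aℂ := A.map (algebraMap ℝ ℂ) with hAc
  set Mℂ := M.map (algebraMap ℝ ℂ) with hMc
  haveI : CompleteSpace (Matrix (Fin k) (Fin k) ℂ) := FiniteDimensional.complete ℂ _
  haveI : CompleteSpace (Matrix (Σ i, Fin (s i)) (Σ i, Fin (s i)) ℂ) :=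
    FiniteDimensional.complete ℂ _
  have hmapnorm : ∀ {n : Type} [Fintype n] [DecidableEq n] (X : Matrix n n ℝ),
      ‖X.map (algebraMap ℝ ℂ)‖₊ = ‖X‖₊ := by
    intro n _ _ X
    rw [Matrix.linfty_opNNNorm_def, Matrix.linfty_opNNNorm_def]
    simp [Matrix.map_apply]
  have key : ∀ m : ℕ, 1 ≤ m → ‖Aℂ ^ m‖₊ ≤ ‖Mℂ ^ m‖₊ := by
    intro m hm
    have e1 : Aℂ ^ m = (A ^ m).map (algebraMap ℝ ℂ) := by
      rw [hAc, ← RingHom.mapMatrix_apply, ← map_pow, RingHom.mapMatrix_apply]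
    have e2 : Mℂ ^ m = (M ^ m).map (algebraMap ℝ ℂ) := by
      rw [hMc, ← RingHom.mapMatrix_apply, ← map_pow, RingHom.mapMatrix_apply]
    rw [e1, e2, hmapnorm, hmapnorm]
    exact DRSC.nnnorm_le hs
      (DRSC.pow_nonneg_entry (DRSC.contr_nonneg hs hM) m hm)
      (DRSC.pow_le_contr hs hM m hm)
      (DRSC.pow_nonneg_entry hM m hm)
  have hrad : spectralRadius ℂ Aℂ ≤ spectralRadius ℂ Mℂ := by
    have hALim := spectrum.spectralRadius_le_liminf_pow_nnnorm_pow_one_div ℂ Aℂ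
    have hMt := spectrum.pow_nnnorm_pow_one_div_tendsto_nhds_spectralRadius Mℂ
    refine hALim.trans ?_
    rw [← hMt.liminf_eq]
    refine Filter.liminf_le_liminf ?_
    filter_upwards [Filter.eventually_ge_atTop 1] with m hm
    exact ENNReal.rpow_le_rpow (by exact_mod_cast key m hm) (by positivity)
  have h0 : 0 ≤ specRad M :=
    Real.sSup_nonneg (by rintro x ⟨μ, -, rfl⟩; exact norm_nonneg μ)
  have hbdd : BddAbove ((fun z : ℂ => ‖z‖) '' spectrum ℂ Mℂ) :=
    ((spectrum.isCompact Mℂ).image continuous_norm).bddAbove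
  have hMrad : spectralRadius ℂ Mℂ ≤ ENNReal.ofReal (specRad M) := by
    rw [spectralRadius]
    refine iSup₂_le fun μ hμ => ?_
    rw [← enorm_eq_nnnorm, ← ofReal_norm]
    refine ENNReal.ofReal_le_ofReal ?_
    exact le_csSup hbdd ⟨μ, hμ, rfl⟩
  refine Real.sSup_le ?_ h0
  rintro x ⟨z, hz, rfl⟩
  have h1 : (‖z‖₊ : ℝ≥0∞) ≤ spectralRadius ℂ Aℂ :=
    le_iSup₂ (f := fun (μ : ℂ) (_ : μ ∈ spectrum ℂ Aℂ) => (‖μ‖₊ : ℝ≥0∞)) z hz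
  have h2 : (‖z‖₊ : ℝ≥0∞) ≤ ENNReal.ofReal (specRad M) := h1.trans (hrad.trans hMrad)
  rw [← enorm_eq_nnnorm, ← ofReal_norm, ENNReal.ofReal_le_ofReal_iff h0] at h2
  exact h2
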